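/- Let L be an r×m integer matrix of invariant type (L𝟙 = 0) and of full rank r, and let A ⊆ T = ℝ/ℤ be a Borel measurable set of positive Haar measure. Then S_L(A) > 0. -/

import Mathlib

open MeasureTheory Set

noncomputable section

/-- The circle group `𝕋 = ℝ/ℤ`, with its normalized Haar (probability) measure `volume`. -/
abbrev 𝕋 : Type := AddCircle (1 : ℝ)

/-- The group homomorphism `x ↦ Lx` induced by an integer matrix `L`. -/
def Lhom {r m : ℕ} (L : Matrix (Fin r) (Fin m) ℤ) (G : Type*) [AddCommGroup G] :
    (Fin m → G) →+ (Fin r → G) where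
  toFun x := fun i => ∑ j, L i j • x j
  map_zero' := by ext i; simp
  map_add' x y := by ext i; simp [smul_add, Finset.sum_add_distrib]

/-- `ker_𝕋 L`, the closed subgroup `{x ∈ 𝕋^m : Lx = 0}` of `𝕋^m`. -/
def kerT {r m : ℕ} (L : Matrix (Fin r) (Fin m) ℤ) : AddSubgroup (Fin m → 𝕋) :=
  (Lhom L 𝕋).ker

/-- Continuity of translation in measure, in Steinhaus-type form. -/
lemma trans_cont (A : Set 𝕋) (hA : MeasurableSet A) {δ : ENNReal} (hδ : 0 < δ) :
    ∃ W ∈ nhds (0 : 𝕋), ∀ s ∈ W, volume (A \ (s + ·) ⁻¹' A) ≤ δ := by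
  have hAfin : volume A ≠ ⊤ := measure_ne_top _ _
  have hhalf : (0:ENNReal) < δ / 2 := ENNReal.div_pos hδ.ne' (by norm_num)
  obtain ⟨C, hCA, hCc, hC⟩ : ∃ C ⊆ A, IsCompact C ∧ volume A ≤ volume C + δ / 2 := by
    obtain ⟨C, hCA, hCc, hC⟩ := hA.exists_isCompact_lt_add (μ := volume) hAfin hhalf.ne'
    exact ⟨C, hCA, hCc, hC.le⟩
  obtain ⟨U, hAU, hUo, hU⟩ := A.exists_isOpen_lt_add (μ := volume) hAfin hhalf.ne'
  obtain ⟨V, hV, hCV⟩ := compact_open_separated_add_right hCc hUo (hCA.trans hAU)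
  refine ⟨(fun s => -s) ⁻¹' V, (continuous_neg.tendsto' 0 0 neg_zero) hV, ?_⟩
  intro s hs
  have hsub : ∀ t, s + t ∈ C → t ∈ U := by
    intro t ht
    have := hCV (Set.add_mem_add ht hs)
    simpa using this
  have h1 : A \ (s + ·) ⁻¹' A ⊆ U \ (s + ·) ⁻¹' C := fun t ht =>
    ⟨hAU ht.1, fun hc => ht.2 (hCA hc)⟩
  have hCs : MeasurableSet ((s + ·) ⁻¹' C) :=
    hCc.isClosed.measurableSet.preimage (measurable_const_add s)
  have hCsU : (s + ·) ⁻¹' C ⊆ U := fun t ht => hsub t ht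
  calc volume (A \ (s + ·) ⁻¹' A) ≤ volume (U \ (s + ·) ⁻¹' C) := measure_mono h1
  _ = volume U - volume ((s + ·) ⁻¹' C) :=
      measure_diff hCsU hCs.nullMeasurableSet (measure_ne_top _ _)
  _ = volume U - volume C := by rw [measure_preimage_add]
  _ ≤ δ := by
      rw [tsub_le_iff_right]
      calc volume U ≤ volume A + δ/2 := hU.le
      _ ≤ (volume C + δ/2) + δ/2 := by gcongr
      _ = δ + volume C := by rw [add_assoc, ENNReal.add_halves, add_comm]

set_option maxHeartbeats 1000000 in
set_option synthInstance.maxHeartbeats 400000 in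
/-- If `L` is an invariant (`L𝟙 = 0`) `r × m` integer matrix of full rank `r`, `μL` is the
normalized Haar probability measure on `ker_𝕋 L`, and `A ⊆ 𝕋` is a Borel set of positive
Haar measure, then `S_L(A) = μL(A^m ∩ ker_𝕋 L) > 0`. -/
theorem pos_measure_pos_solutions {r m : ℕ} (L : Matrix (Fin r) (Fin m) ℤ)
    (hrank : (L.map (Int.cast : ℤ → ℚ)).rank = r)
    (hinv : ∀ i, ∑ j, L i j = 0)
    (μL : Measure (kerT L)) (hHaar : μL.IsAddHaarMeasure) (hprob : IsProbabilityMeasure μL)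
    (A : Set 𝕋) (hA : MeasurableSet A) (hpos : 0 < volume A) :
    0 < μL {x : kerT L | ∀ i, (x : Fin m → 𝕋) i ∈ A} := by
  haveI := hHaar
  haveI := hprob
  haveI hbs : BorelSpace (kerT L) := Subtype.borelSpace ((kerT L : Set (Fin m → 𝕋)))
  haveI : SFinite μL := inferInstance
  haveI : MeasurableAdd (kerT L) := inferInstance
  haveI : IsProbabilityMeasure (volume : Measure 𝕋) :=
    ⟨by simp [AddCircle.measure_univ]⟩
  set B : Set (kerT L) := {x : kerT L | ∀ i, (x : Fin m → 𝕋) i ∈ A} with hBdef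
  -- trivial case m = 0
  rcases Nat.eq_zero_or_pos m with hm | hm
  · have : B = univ := eq_univ_of_forall (fun x i => (Fin.elim0 (hm ▸ i)))
    rw [this, measure_univ]
    norm_num
  -- diagonal
  have hdiag : ∀ t : 𝕋, (fun _ : Fin m => t) ∈ kerT L := by
    intro t
    show Lhom L 𝕋 _ = 0
    funext i
    show ∑ j, L i j • t = 0
    rw [← Finset.sum_smul, hinv i, zero_smul]
  let d : 𝕋 → kerT L := fun t => ⟨fun _ => t, hdiag t⟩
  -- the joint set
  set S : Set (𝕋 × kerT L) := {p | ∀ i, (p.2 : Fin m → 𝕋) i + p.1 ∈ A} with hSdef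
  have hSm : MeasurableSet S := by
    have : S = ⋂ i, (fun p : 𝕋 × kerT L => (p.2 : Fin m → 𝕋) i + p.1) ⁻¹' A := by
      ext p; simp [hSdef]
    rw [this]
    refine MeasurableSet.iInter fun i => ?_
    have h1 : Continuous fun p : 𝕋 × kerT L => (p.2 : Fin m → 𝕋) i := by
      exact (continuous_apply i).comp (continuous_subtype_val.comp continuous_snd)
    have hc : Continuous fun p : 𝕋 × kerT L => (p.2 : Fin m → 𝕋) i + p.1 :=
      h1.add continuous_fst
    exact hc.measurable hA
  have hBm : MeasurableSet B := by
    have : B = ⋂ i, (fun x : kerT L => (x : Fin m → 𝕋) i) ⁻¹' A := by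
      ext x; simp [hBdef]
    rw [this]
    refine MeasurableSet.iInter fun i => ?_
    have hc : Continuous fun x : kerT L => (x : Fin m → 𝕋) i := by
      exact (continuous_apply i).comp continuous_subtype_val
    exact hc.measurable hA
  -- Fubini
  have hleft : (volume.prod μL) S = μL B := by
    rw [Measure.prod_apply hSm]
    have hfiber : ∀ t : 𝕋, (Prod.mk t ⁻¹' S) = (fun x : kerT L => x + d t) ⁻¹' B := by
      intro t; ext x
      simp only [mem_preimage, mem_setOf_eq, hSdef, hBdef, d]
      constructor
      · intro h i; simpa using h i
      · intro h i; simpa using h i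
    have : ∀ t : 𝕋, μL (Prod.mk t ⁻¹' S) = μL B := by
      intro t
      rw [hfiber t]
      exact measure_preimage_add_right μL (d t) B
    simp_rw [this]
    rw [lintegral_const, measure_univ, mul_one]
  have hright : (volume.prod μL) S =
      ∫⁻ x, volume {t : 𝕋 | ∀ i, (x : Fin m → 𝕋) i + t ∈ A} ∂μL := by
    rw [Measure.prod_apply_symm hSm]
    rfl
  -- the quantitative translation bound
  set a := volume A with hadef
  have ha_ne_top : a ≠ ⊤ := measure_ne_top _ _
  have hδpos : (0:ENNReal) < a / 2 / m :=
    ENNReal.div_pos (ENNReal.div_pos hpos.ne' (by norm_num)).ne'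
      (ENNReal.natCast_ne_top m)
  obtain ⟨W, hW, hWbound⟩ := trans_cont A hA hδpos
  obtain ⟨W₀, hW₀W, hW₀o, h0W₀⟩ := mem_nhds_iff.mp hW
  -- pointwise lower bound
  have hlower : ∀ x : Fin m → 𝕋, (∀ i, x i ∈ W₀) →
      a / 2 ≤ volume {t : 𝕋 | ∀ i, x i + t ∈ A} := by
    intro x hx
    have hsubset : A ⊆ {t : 𝕋 | ∀ i, x i + t ∈ A} ∪ ⋃ i, (A \ (x i + ·) ⁻¹' A) := by
      intro t ht
      by_cases h : ∀ i, x i + t ∈ A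
      · exact Or.inl h
      · push_neg at h
        obtain ⟨i, hi⟩ := h
        exact Or.inr (mem_iUnion.mpr ⟨i, ht, hi⟩)
    have hsum : volume (⋃ i, (A \ (x i + ·) ⁻¹' A)) ≤ a / 2 := by
      calc volume (⋃ i, (A \ (x i + ·) ⁻¹' A)) ≤ ∑ i, volume (A \ (x i + ·) ⁻¹' A) :=
            measure_iUnion_fintype_le _ _
      _ ≤ ∑ _i : Fin m, a / 2 / m := Finset.sum_le_sum fun i _ => hWbound _ (hW₀W (hx i))
      _ = (m : ENNReal) * (a / 2 / m) := by
            rw [Finset.sum_const, Finset.card_univ, Fintype.card_fin, nsmul_eq_mul]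
      _ ≤ a / 2 := ENNReal.mul_div_le
    have key : a ≤ volume {t : 𝕋 | ∀ i, x i + t ∈ A} + a / 2 := by
      calc a ≤ volume ({t : 𝕋 | ∀ i, x i + t ∈ A} ∪ ⋃ i, (A \ (x i + ·) ⁻¹' A)) :=
            measure_mono hsubset
      _ ≤ volume {t : 𝕋 | ∀ i, x i + t ∈ A} + volume (⋃ i, (A \ (x i + ·) ⁻¹' A)) :=
            measure_union_le _ _
      _ ≤ _ := by gcongr
    have := tsub_le_iff_right.mpr key
    rwa [ENNReal.sub_half ha_ne_top] at this
  -- the open neighborhood in the kernel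
  set V : Set (kerT L) := ⋂ i, (fun x : kerT L => (x : Fin m → 𝕋) i) ⁻¹' W₀ with hVdef
  have hVopen : IsOpen V :=
    isOpen_iInter_of_finite fun i =>
      hW₀o.preimage ((continuous_apply i).comp continuous_subtype_val)
  have h0V : (0 : kerT L) ∈ V := by
    refine mem_iInter.mpr fun i => ?_
    show ((0 : kerT L) : Fin m → 𝕋) i ∈ W₀
    simpa using h0W₀
  have hVpos : 0 < μL V := hVopen.measure_pos μL ⟨0, h0V⟩
  -- conclude
  have hfinal : (a / 2) * μL V ≤ μL B := by
    rw [← hleft, hright]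
    calc (a / 2) * μL V = ∫⁻ x, V.indicator (fun _ => a / 2) x ∂μL := by
          rw [lintegral_indicator hVopen.measurableSet, setLIntegral_const]
    _ ≤ ∫⁻ x, volume {t : 𝕋 | ∀ i, (x : Fin m → 𝕋) i + t ∈ A} ∂μL := by
          refine lintegral_mono fun x => ?_
          by_cases hx : x ∈ V
          · rw [indicator_of_mem hx]
            exact hlower _ (fun i => mem_iInter.mp hx i)
          · rw [indicator_of_notMem hx]
            exact zero_le
  refine lt_of_lt_of_le ?_ hfinal
  exact ENNReal.mul_pos (ENNReal.div_pos hpos.ne' (by norm_num)).ne' hVpos.ne'
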